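/- Consider a periodic switched matrix-weighted network on n nodes: let L^0, L^1, …, L^{m−1} (m ≥ 1) be matrix-valued Laplacians (each symmetric positive semidefinite with R ⊆ null(L^k)) with dwell times Δt_0, …, Δt_{m−1} > 0, and for k ∈ ℕ set L^k = L^{k mod m} and Δt_k = Δt_{k mod m}. Then the following are equivalent: (i) for every initial state x_0 ∈ ℝ^{dn}, the sequence defined by x_{k+1} = exp(−Δt_k L^k) x_k converges to the average consensus value x_f = 1_n ⊗ ((1/n) Σ_{i=1}^n (x_0)_i); (ii) the null space of the integral Laplacian over one period, Σ_{k=0}^{m−1} Δt_k L^k, equals R. -/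

import Mathlib

open Matrix Finset Filter

/-- The matrix-valued Laplacian of a matrix-weighted graph on `n` nodes with
state dimension `d`: the `(i,j)` off-diagonal block is `-A i j` and the `i`-th
diagonal block is `∑ k ≠ i, A i k`. -/
noncomputable def mwLaplacian {n d : ℕ} (A : Fin n → Fin n → Matrix (Fin d) (Fin d) ℝ) :
    Matrix (Fin n × Fin d) (Fin n × Fin d) ℝ :=
  fun p q =>
    if p.1 = q.1 then ∑ k ∈ Finset.univ.erase p.1, A p.1 k p.2 q.2
    else -(A p.1 q.1 p.2 q.2)

/-- Membership in the consensus subspace `R = range (1ₙ ⊗ I_d)`: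
all blocks of `x` are equal. -/
def isConsensus {n d : ℕ} (x : Fin n × Fin d → ℝ) : Prop :=
  ∃ v : Fin d → ℝ, ∀ p : Fin n × Fin d, x p = v p.2

/-- The Euclidean norm on `ι → ℝ`. -/
noncomputable def euclNorm {ι : Type*} [Fintype ι] (x : ι → ℝ) : ℝ :=
  Real.sqrt (x ⬝ᵥ x)

/-- The state of the switched system at switching instants:
`x_0 = x0`, `x_{k+1} = E k ⬝ x_k`. -/
noncomputable def stateSeq {ι : Type*} [Fintype ι] [DecidableEq ι]
    (E : ℕ → Matrix ι ι ℝ) (x0 : ι → ℝ) : ℕ → ι → ℝ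
  | 0 => x0
  | k + 1 => (E k).mulVec (stateSeq E x0 k)


set_option linter.unusedSectionVars false
set_option maxHeartbeats 1000000
open Matrix NormedSpace


section Core
variable {ι : Type*} [Fintype ι] [DecidableEq ι]

noncomputable def toE (x : ι → ℝ) : EuclideanSpace ℝ ι := (EuclideanSpace.equiv ι ℝ).symm x

noncomputable def mulVecAt (v : ι → ℝ) : Matrix ι ι ℝ →ₗ[ℝ] (ι → ℝ) where
  toFun A := A *ᵥ v
  map_add' A B := Matrix.add_mulVec A B v
  map_smul' c A := smul_mulVec c A v

theorem exp_mulVec_eigenvector {A : Matrix ι ι ℝ} {v : ι → ℝ} {μ : ℝ}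
    (hv : A *ᵥ v = μ • v) : exp A *ᵥ v = Real.exp μ • v := by
  letI : SeminormedRing (Matrix ι ι ℝ) := Matrix.linftyOpSemiNormedRing
  letI : NormedRing (Matrix ι ι ℝ) := Matrix.linftyOpNormedRing
  letI : NormedAlgebra ℝ (Matrix ι ι ℝ) := Matrix.linftyOpNormedAlgebra
  have hpow : ∀ k : ℕ, A ^ k *ᵥ v = μ ^ k • v := by
    intro k
    induction k with
    | zero => simp
    | succ k ih =>
        rw [pow_succ', pow_succ', ← Matrix.mulVec_mulVec, ih, Matrix.mulVec_smul, hv,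
          smul_smul, mul_comm]
  have hsum : Summable fun k : ℕ => ((k.factorial : ℝ)⁻¹) • A ^ k :=
    expSeries_summable' (𝕂 := ℝ) A
  have hφ := ((mulVecAt v).toContinuousLinearMap).map_tsum hsum
  have h1 : exp A *ᵥ v = ∑' k : ℕ, ((k.factorial : ℝ)⁻¹) • (A ^ k *ᵥ v) := by
    rw [exp_eq_tsum ℝ]
    simpa [mulVecAt, Matrix.smul_mulVec] using hφ
  rw [h1]
  have h2 : ∀ k : ℕ, ((k.factorial : ℝ)⁻¹) • (A ^ k *ᵥ v)
      = (((k.factorial : ℝ)⁻¹) * μ ^ k) • v := by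
    intro k; rw [hpow, smul_smul]
  simp_rw [h2]
  have hsum2 : Summable fun k : ℕ => ((k.factorial : ℝ)⁻¹) * μ ^ k := by
    refine (Real.summable_pow_div_factorial μ).congr fun k => ?_
    rw [div_eq_inv_mul, mul_comm]
  rw [hsum2.tsum_smul_const, Real.exp_eq_exp_ℝ, NormedSpace.exp_eq_tsum ℝ]
  norm_num

theorem inner_toE (x y : ι → ℝ) : (inner ℝ (toE x) (toE y) : ℝ) = x ⬝ᵥ y := by
  rw [PiLp.inner_apply]; simp [dotProduct]; exact Finset.sum_congr rfl fun i _ => mul_comm _ _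

theorem euclNorm_eq_norm (x : ι → ℝ) : euclNorm x = ‖toE x‖ := by
  rw [EuclideanSpace.norm_eq, euclNorm]
  congr 1; simp [dotProduct, sq]; rfl

theorem euclNorm_eq_repr (b : OrthonormalBasis ι ℝ (EuclideanSpace ℝ ι)) (x : ι → ℝ) :
    euclNorm x = Real.sqrt (∑ i, (b.repr (toE x) i)^2) := by
  rw [euclNorm_eq_norm, ← b.repr.norm_map (toE x), EuclideanSpace.norm_eq]
  congr 1; refine Finset.sum_congr rfl fun i _ => ?_
  rw [Real.norm_eq_abs, sq_abs]

theorem toE_eq_zero {x : ι → ℝ} (h : toE x = 0) : x = 0 := by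
  funext i
  have := congrFun (congrArg (fun (y : EuclideanSpace ℝ ι) => (EuclideanSpace.equiv ι ℝ) y) h) i
  exact this

theorem repr_mulVec (b : OrthonormalBasis ι ℝ (EuclideanSpace ℝ ι))
    {M : Matrix ι ι ℝ} (hM : Mᵀ = M) {ν : ι → ℝ}
    (hb : ∀ i, M *ᵥ ⇑(b i) = ν i • ⇑(b i)) (x : ι → ℝ) (i : ι) :
    b.repr (toE (M *ᵥ x)) i = ν i * b.repr (toE x) i := by
  have hbe : toE ⇑(b i) = b i := rfl
  rw [b.repr_apply_apply, b.repr_apply_apply, ← hbe, inner_toE, inner_toE,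
    Matrix.dotProduct_mulVec, ← Matrix.mulVec_transpose, hM, hb i,
    smul_dotProduct, smul_eq_mul]

theorem exp_neg_smul_transpose {L : Matrix ι ι ℝ} (hL : L.IsHermitian) (t : ℝ) :
    (exp (-(t • L)))ᵀ = exp (-(t • L)) := by
  rw [← Matrix.exp_transpose]
  congr 1
  rw [transpose_neg, transpose_smul, ← conjTranspose_eq_transpose_of_trivial, hL.eq]

theorem sq_mul_le {e c : ℝ} (h0 : 0 ≤ e) (h1 : e ≤ 1) : (e*c)^2 ≤ c^2 := by
  nlinarith [sq_nonneg c, sq_nonneg (e*c), mul_self_nonneg ((1-e)*c)]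

section PSD
variable {L : Matrix ι ι ℝ} {t : ℝ}

theorem L_transpose (hL : L.PosSemidef) : Lᵀ = L := by
  rw [← conjTranspose_eq_transpose_of_trivial, hL.1.eq]

theorem neg_smul_mulVec_basis (hL : L.PosSemidef) (t : ℝ) (i : ι) :
    (-(t • L)) *ᵥ ⇑(hL.1.eigenvectorBasis i)
      = (-(t * hL.1.eigenvalues i)) • ⇑(hL.1.eigenvectorBasis i) := by
  rw [Matrix.neg_mulVec, smul_mulVec, hL.1.mulVec_eigenvectorBasis, smul_smul,
    ← neg_smul]

theorem exp_mulVec_basis (hL : L.PosSemidef) (t : ℝ) (i : ι) :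
    exp (-(t • L)) *ᵥ ⇑(hL.1.eigenvectorBasis i)
      = Real.exp (-(t * hL.1.eigenvalues i)) • ⇑(hL.1.eigenvectorBasis i) :=
  exp_mulVec_eigenvector (neg_smul_mulVec_basis hL t i)

theorem exp_mulVec_of_mulVec_zero {x : ι → ℝ} (hx : L *ᵥ x = 0) :
    exp (-(t • L)) *ᵥ x = x := by
  have h : (-(t • L)) *ᵥ x = (0:ℝ) • x := by
    rw [Matrix.neg_mulVec, smul_mulVec, hx]; simp
  rw [exp_mulVec_eigenvector h, Real.exp_zero, one_smul]

theorem repr_exp_mulVec (hL : L.PosSemidef) (t : ℝ) (x : ι → ℝ) (i : ι) :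
    hL.1.eigenvectorBasis.repr (toE (exp (-(t • L)) *ᵥ x)) i
      = Real.exp (-(t * hL.1.eigenvalues i)) * hL.1.eigenvectorBasis.repr (toE x) i :=
  repr_mulVec _ (exp_neg_smul_transpose hL.1 t) (exp_mulVec_basis hL t) x i

theorem repr_L_mulVec (hL : L.PosSemidef) (x : ι → ℝ) (i : ι) :
    hL.1.eigenvectorBasis.repr (toE (L *ᵥ x)) i
      = hL.1.eigenvalues i * hL.1.eigenvectorBasis.repr (toE x) i :=
  repr_mulVec _ (L_transpose hL) (fun i => hL.1.mulVec_eigenvectorBasis i) x i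

theorem euclNorm_exp_mulVec_le (hL : L.PosSemidef) (ht : 0 < t) (x : ι → ℝ) :
    euclNorm (exp (-(t • L)) *ᵥ x) ≤ euclNorm x := by
  rw [euclNorm_eq_repr hL.1.eigenvectorBasis, euclNorm_eq_repr hL.1.eigenvectorBasis]
  apply Real.sqrt_le_sqrt
  refine Finset.sum_le_sum fun i _ => ?_
  rw [repr_exp_mulVec hL t x i]
  refine sq_mul_le (Real.exp_pos _).le ?_
  rw [Real.exp_le_one_iff]
  exact neg_nonpos.mpr (mul_nonneg ht.le (hL.eigenvalues_nonneg i))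

theorem mulVec_eq_zero_of_euclNorm_eq (hL : L.PosSemidef) (ht : 0 < t) {x : ι → ℝ}
    (h : euclNorm (exp (-(t • L)) *ᵥ x) = euclNorm x) : L *ᵥ x = 0 := by
  have hexple : ∀ i, Real.exp (-(t * hL.1.eigenvalues i)) ≤ 1 := fun i => by
    rw [Real.exp_le_one_iff]
    exact neg_nonpos.mpr (mul_nonneg ht.le (hL.eigenvalues_nonneg i))
  have hsum : ∑ i, (Real.exp (-(t * hL.1.eigenvalues i)) * hL.1.eigenvectorBasis.repr (toE x) i)^2
      = ∑ i, (hL.1.eigenvectorBasis.repr (toE x) i)^2 := by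
    have h1 := h
    rw [euclNorm_eq_repr hL.1.eigenvectorBasis, euclNorm_eq_repr hL.1.eigenvectorBasis] at h1
    simp_rw [repr_exp_mulVec hL t x] at h1
    exact (Real.sqrt_inj (Finset.sum_nonneg fun i _ => sq_nonneg _)
      (Finset.sum_nonneg fun i _ => sq_nonneg _)).mp h1
  have heach := (Finset.sum_eq_sum_iff_of_le
    (fun i _ => sq_mul_le (Real.exp_pos _).le (hexple i))).mp hsum
  have key : ∀ i, hL.1.eigenvalues i * hL.1.eigenvectorBasis.repr (toE x) i = 0 := by
    intro i
    have hi := heach i (Finset.mem_univ i)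
    rcases (hL.eigenvalues_nonneg i).eq_or_lt with hev | hev
    · rw [← hev, zero_mul]
    · have hlt : Real.exp (-(t * hL.1.eigenvalues i)) < 1 := by
        rw [Real.exp_lt_one_iff]
        exact neg_neg_iff_pos.mpr (mul_pos ht hev)
      by_contra hc
      have hcpos : 0 < (hL.1.eigenvectorBasis.repr (toE x) i)^2 := by
        have : hL.1.eigenvectorBasis.repr (toE x) i ≠ 0 := fun h0 => hc (by rw [h0, mul_zero])
        positivity
      have hepos : (0:ℝ) < Real.exp (-(t * hL.1.eigenvalues i)) := Real.exp_pos _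
      have hi2 : (Real.exp (-(t * hL.1.eigenvalues i)))^2
          * (hL.1.eigenvectorBasis.repr (toE x) i)^2
          = (hL.1.eigenvectorBasis.repr (toE x) i)^2 := by rw [← mul_pow]; exact hi
      have he2 : (Real.exp (-(t * hL.1.eigenvalues i)))^2 < 1 := by nlinarith
      nlinarith [mul_pos (sub_pos.mpr he2) hcpos]
  apply toE_eq_zero
  apply hL.1.eigenvectorBasis.repr.injective
  rw [map_zero]
  ext i
  rw [repr_L_mulVec hL x i, key i]
  rfl
end PSD

/-- products of the step matrices -/
noncomputable def Pseq (E : ℕ → Matrix ι ι ℝ) : ℕ → Matrix ι ι ℝ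
  | 0 => 1
  | k + 1 => E k * Pseq E k

theorem stateSeq_eq_Pseq (E : ℕ → Matrix ι ι ℝ) (x0 : ι → ℝ) (k : ℕ) :
    stateSeq E x0 k = (Pseq E k) *ᵥ x0 := by
  induction k with
  | zero => simp [stateSeq, Pseq]
  | succ k ih => rw [stateSeq, ih, Pseq, ← Matrix.mulVec_mulVec]

theorem Pseq_add (E : ℕ → Matrix ι ι ℝ) (s i : ℕ) :
    Pseq E (s + i) = Pseq (fun k => E (s + k)) i * Pseq E s := by
  induction i with
  | zero => simp [Pseq]
  | succ i ih => rw [← Nat.add_assoc, Pseq, ih, Pseq, mul_assoc]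

theorem euclNorm_pos_of_ne_zero {x : ι → ℝ} (hx : x ≠ 0) : 0 < euclNorm x := by
  rw [euclNorm_eq_norm]
  rw [norm_pos_iff]
  intro h
  exact hx (toE_eq_zero h)

theorem abs_apply_le_euclNorm (x : ι → ℝ) (p : ι) : |x p| ≤ euclNorm x := by
  rw [euclNorm, ← Real.sqrt_sq_eq_abs]
  apply Real.sqrt_le_sqrt
  rw [dotProduct]
  have : x p ^ 2 = x p * x p := sq (x p) ▸ by ring
  rw [this]
  exact Finset.single_le_sum (fun i _ => mul_self_nonneg (x i)) (Finset.mem_univ p)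

end Core

open Finset Filter


section Cons
variable {n d : ℕ}

/-- consensus subspace as a submodule of Euclidean space -/
noncomputable def consSub (n d : ℕ) : Submodule ℝ (EuclideanSpace ℝ (Fin n × Fin d)) where
  carrier := {y | isConsensus (fun p => y p)}
  add_mem' := by
    rintro y z ⟨v, hv⟩ ⟨w, hw⟩
    exact ⟨v + w, fun p => by simp [hv p, hw p]⟩
  zero_mem' := ⟨0, fun p => by simp⟩
  smul_mem' := by
    rintro c y ⟨v, hv⟩
    exact ⟨c • v, fun p => by simp [hv p]⟩

theorem mem_consSub_iff (y : EuclideanSpace ℝ (Fin n × Fin d)) :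
    y ∈ consSub n d ↔ isConsensus (fun p => y p) := Iff.rfl

theorem toE_mem_consSub {x : Fin n × Fin d → ℝ} (hx : isConsensus x) :
    toE x ∈ consSub n d := hx

theorem mem_orth_iff (y : Fin n × Fin d → ℝ) :
    toE y ∈ (consSub n d)ᗮ ↔ ∀ c : Fin n × Fin d → ℝ, isConsensus c → c ⬝ᵥ y = 0 := by
  rw [Submodule.mem_orthogonal]
  constructor
  · intro h c hc
    rw [← inner_toE]
    exact h (toE c) (toE_mem_consSub hc)
  · intro h u hu
    have hu' : isConsensus (fun p => u p) := hu
    have : toE (fun p => u p) = u := rfl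
    rw [← this, inner_toE]
    exact h _ hu'

noncomputable def avgVec (n d : ℕ) (x0 : Fin n × Fin d → ℝ) : Fin n × Fin d → ℝ :=
  fun p => (n : ℝ)⁻¹ * ∑ i : Fin n, x0 (i, p.2)

theorem avgVec_isConsensus (x0 : Fin n × Fin d → ℝ) : isConsensus (avgVec n d x0) :=
  ⟨fun q => (n : ℝ)⁻¹ * ∑ i : Fin n, x0 (i, q), fun _ => rfl⟩

theorem dot_sum_vec {ι : Type*} [Fintype ι] {κ : Type*} (s : Finset κ)
    (x : ι → ℝ) (v : κ → ι → ℝ) : x ⬝ᵥ (∑ k ∈ s, v k) = ∑ k ∈ s, x ⬝ᵥ v k := by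
  simp [dotProduct, Finset.mul_sum]
  rw [Finset.sum_comm]

theorem consensus_dot_sub_avg (hn : 0 < n) (x0 c : Fin n × Fin d → ℝ)
    (hc : isConsensus c) : c ⬝ᵥ (x0 - avgVec n d x0) = 0 := by
  obtain ⟨v, hv⟩ := hc
  rw [dotProduct, Fintype.sum_prod_type]
  rw [Finset.sum_comm]
  refine Finset.sum_eq_zero fun q _ => ?_
  have : ∀ i : Fin n, c (i, q) * (x0 - avgVec n d x0) (i, q)
      = v q * (x0 (i, q) - (n : ℝ)⁻¹ * ∑ j : Fin n, x0 (j, q)) := by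
    intro i
    rw [hv (i, q)]
    rfl
  simp_rw [this, ← Finset.mul_sum]
  rw [Finset.sum_sub_distrib, Finset.sum_const, Finset.card_univ, Fintype.card_fin,
    nsmul_eq_mul, ← mul_assoc, mul_inv_cancel₀ (by exact_mod_cast hn.ne' : (n:ℝ) ≠ 0), one_mul,
    sub_self, mul_zero]
end Cons
section Sys
variable {n d m : ℕ}
  {L : ℕ → Matrix (Fin n × Fin d) (Fin n × Fin d) ℝ} {Δt : ℕ → ℝ}

/-- abbreviation for the step matrices -/
noncomputable def Emat (L : ℕ → Matrix (Fin n × Fin d) (Fin n × Fin d) ℝ) (Δt : ℕ → ℝ)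
    (k : ℕ) : Matrix (Fin n × Fin d) (Fin n × Fin d) ℝ :=
  NormedSpace.exp (-(Δt k • L k))

theorem Emat_fix (hR : ∀ k, ∀ x : Fin n × Fin d → ℝ, isConsensus x → (L k).mulVec x = 0)
    (k : ℕ) {x : Fin n × Fin d → ℝ} (hx : isConsensus x) : Emat L Δt k *ᵥ x = x :=
  exp_mulVec_of_mulVec_zero (hR k x hx)

theorem Emat_fix' (k : ℕ) {x : Fin n × Fin d → ℝ} (hx : (L k) *ᵥ x = 0) :
    Emat L Δt k *ᵥ x = x :=
  exp_mulVec_of_mulVec_zero hx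

theorem Emat_norm_le (hpsd : ∀ k, (L k).PosSemidef) (hΔ : ∀ k, 0 < Δt k)
    (k : ℕ) (x : Fin n × Fin d → ℝ) :
    euclNorm (Emat L Δt k *ᵥ x) ≤ euclNorm x :=
  euclNorm_exp_mulVec_le (hpsd k) (hΔ k) x

theorem Emat_dot (hpsd : ∀ k, (L k).PosSemidef)
    (hR : ∀ k, ∀ x : Fin n × Fin d → ℝ, isConsensus x → (L k).mulVec x = 0)
    (k : ℕ) {c : Fin n × Fin d → ℝ} (hc : isConsensus c) (y : Fin n × Fin d → ℝ) :
    c ⬝ᵥ (Emat L Δt k *ᵥ y) = c ⬝ᵥ y := by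
  rw [Matrix.dotProduct_mulVec, ← Matrix.mulVec_transpose, Emat,
    exp_neg_smul_transpose (hpsd k).1, ← Emat, Emat_fix hR k hc]

theorem Pseq_norm_le (hpsd : ∀ k, (L k).PosSemidef) (hΔ : ∀ k, 0 < Δt k)
    (i : ℕ) (x : Fin n × Fin d → ℝ) :
    euclNorm (Pseq (Emat L Δt) i *ᵥ x) ≤ euclNorm x := by
  induction i with
  | zero => rw [Pseq, Matrix.one_mulVec]
  | succ i ih =>
      rw [Pseq, ← Matrix.mulVec_mulVec]
      exact le_trans (Emat_norm_le hpsd hΔ i _) ih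

theorem Pseq_fix (hR : ∀ k, ∀ x : Fin n × Fin d → ℝ, isConsensus x → (L k).mulVec x = 0)
    (i : ℕ) {x : Fin n × Fin d → ℝ} (hx : isConsensus x) :
    Pseq (Emat L Δt) i *ᵥ x = x := by
  induction i with
  | zero => rw [Pseq, Matrix.one_mulVec]
  | succ i ih => rw [Pseq, ← Matrix.mulVec_mulVec, ih, Emat_fix hR i hx]

theorem Pseq_fix' (i : ℕ) {x : Fin n × Fin d → ℝ} (hx : ∀ k < i, (L k) *ᵥ x = 0) :
    Pseq (Emat L Δt) i *ᵥ x = x := by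
  induction i with
  | zero => rw [Pseq, Matrix.one_mulVec]
  | succ i ih =>
      rw [Pseq, ← Matrix.mulVec_mulVec, ih (fun k hk => hx k (Nat.lt_succ_of_lt hk)),
        Emat_fix' i (hx i (Nat.lt_succ_self i))]

theorem Pseq_dot (hpsd : ∀ k, (L k).PosSemidef)
    (hR : ∀ k, ∀ x : Fin n × Fin d → ℝ, isConsensus x → (L k).mulVec x = 0)
    (i : ℕ) {c : Fin n × Fin d → ℝ} (hc : isConsensus c) (y : Fin n × Fin d → ℝ) :
    c ⬝ᵥ (Pseq (Emat L Δt) i *ᵥ y) = c ⬝ᵥ y := by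
  induction i with
  | zero => rw [Pseq, Matrix.one_mulVec]
  | succ i ih => rw [Pseq, ← Matrix.mulVec_mulVec, Emat_dot hpsd hR i hc, ih]

theorem Pseq_strict (hpsd : ∀ k, (L k).PosSemidef) (hΔ : ∀ k, 0 < Δt k)
    (i : ℕ) {x : Fin n × Fin d → ℝ}
    (h : euclNorm (Pseq (Emat L Δt) i *ᵥ x) = euclNorm x) :
    ∀ k < i, (L k) *ᵥ x = 0 := by
  induction i with
  | zero => intro k hk; exact absurd hk (Nat.not_lt_zero k)
  | succ i ih =>
      rw [Pseq, ← Matrix.mulVec_mulVec] at h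
      have h1 : euclNorm (Pseq (Emat L Δt) i *ᵥ x) = euclNorm x := by
        refine le_antisymm (Pseq_norm_le hpsd hΔ i x) ?_
        calc euclNorm x = euclNorm (Emat L Δt i *ᵥ (Pseq (Emat L Δt) i *ᵥ x)) := h.symm
          _ ≤ euclNorm (Pseq (Emat L Δt) i *ᵥ x) := Emat_norm_le hpsd hΔ i _
      have hprev := ih h1
      have hfix : Pseq (Emat L Δt) i *ᵥ x = x := Pseq_fix' i hprev
      rw [hfix] at h
      have hLi : (L i) *ᵥ x = 0 := mulVec_eq_zero_of_euclNorm_eq (hpsd i) (hΔ i) h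
      intro k hk
      rcases Nat.lt_succ_iff_lt_or_eq.mp hk with hk' | rfl
      · exact hprev k hk'
      · exact hLi

theorem Emat_periodic (hLper : ∀ k, L k = L (k % m)) (hΔper : ∀ k, Δt k = Δt (k % m))
    (j k : ℕ) : Emat L Δt (m * j + k) = Emat L Δt k := by
  unfold Emat
  rw [hLper (m*j+k), hΔper (m*j+k), Nat.mul_add_mod, ← hLper k, ← hΔper k]

theorem Pseq_shift (hLper : ∀ k, L k = L (k % m)) (hΔper : ∀ k, Δt k = Δt (k % m))
    (j i : ℕ) :
    Pseq (Emat L Δt) (m * j + i) = Pseq (Emat L Δt) i * Pseq (Emat L Δt) (m * j) := by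
  rw [Pseq_add]
  congr 1
  exact congrArg (fun E => Pseq E i) (funext fun k => Emat_periodic hLper hΔper j k)

end Sys
section Contr
variable {n d m : ℕ}
  {L : ℕ → Matrix (Fin n × Fin d) (Fin n × Fin d) ℝ} {Δt : ℕ → ℝ}

theorem toE_Pseq_mem_orth (hpsd : ∀ k, (L k).PosSemidef)
    (hR : ∀ k, ∀ x : Fin n × Fin d → ℝ, isConsensus x → (L k).mulVec x = 0)
    (i : ℕ) {x : Fin n × Fin d → ℝ} (hx : toE x ∈ (consSub n d)ᗮ) :
    toE (Pseq (Emat L Δt) i *ᵥ x) ∈ (consSub n d)ᗮ := by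
  rw [mem_orth_iff] at hx ⊢
  intro c hc
  rw [Pseq_dot hpsd hR i hc]
  exact hx c hc

/-- the key contraction estimate over one period -/
theorem contraction (hm : 1 ≤ m)
    (hLper : ∀ k, L k = L (k % m)) (hΔper : ∀ k, Δt k = Δt (k % m))
    (hΔ : ∀ k, 0 < Δt k) (hpsd : ∀ k, (L k).PosSemidef)
    (hR : ∀ k, ∀ x : Fin n × Fin d → ℝ, isConsensus x → (L k).mulVec x = 0)
    (Hnull : ∀ x : Fin n × Fin d → ℝ,
      ((∑ k ∈ Finset.range m, Δt k • L k).mulVec x = 0 ↔ isConsensus x)) :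
    ∃ ρ : ℝ, 0 ≤ ρ ∧ ρ < 1 ∧ ∀ x : Fin n × Fin d → ℝ, toE x ∈ (consSub n d)ᗮ →
      euclNorm (Pseq (Emat L Δt) m *ᵥ x) ≤ ρ * euclNorm x := by
  classical
  -- strict decrease pointwise
  have hstrict : ∀ x : Fin n × Fin d → ℝ, toE x ∈ (consSub n d)ᗮ → x ≠ 0 →
      euclNorm (Pseq (Emat L Δt) m *ᵥ x) < euclNorm x := by
    intro x hxW hx0
    rcases (Pseq_norm_le hpsd hΔ m x).lt_or_eq with hlt | heq
    · exact hlt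
    · exfalso
      have hall := Pseq_strict hpsd hΔ m heq
      have hS : (∑ k ∈ Finset.range m, Δt k • L k).mulVec x = 0 := by
        have h1 := map_sum (mulVecAt x) (fun k => Δt k • L k) (Finset.range m)
        have h2 : (mulVecAt x) (∑ k ∈ Finset.range m, Δt k • L k)
            = (∑ k ∈ Finset.range m, Δt k • L k) *ᵥ x := rfl
        rw [h2] at h1
        rw [h1]
        refine Finset.sum_eq_zero fun k hk => ?_
        have : (mulVecAt x) (Δt k • L k) = Δt k • ((L k) *ᵥ x) := by
          simp [mulVecAt, Matrix.smul_mulVec]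
        rw [this, hall k (Finset.mem_range.mp hk), smul_zero]
      have hcons : isConsensus x := (Hnull x).mp hS
      have hmem : toE x ∈ consSub n d := toE_mem_consSub hcons
      have := (Submodule.mem_orthogonal _ _).mp hxW (toE x) hmem
      rw [inner_toE] at this
      have : x = 0 := by
        have h0 : toE x = 0 := by
          have := inner_self_eq_zero (𝕜 := ℝ) (x := toE x) |>.mp (by rw [inner_toE]; exact this)
          exact this
        exact toE_eq_zero h0
      exact hx0 this
  -- the continuous linear map
  let P := Pseq (Emat L Δt) m
  let Flin : EuclideanSpace ℝ (Fin n × Fin d) →ₗ[ℝ] EuclideanSpace ℝ (Fin n × Fin d) :=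
    { toFun := fun y => toE (P *ᵥ (fun p => y p))
      map_add' := by
        intro y z
        show toE (P *ᵥ fun p => (y + z) p) = toE (P *ᵥ fun p => y p) + toE (P *ᵥ fun p => z p)
        have h1 : (fun p => (y + z) p) = (fun p => y p) + (fun p => z p) := rfl
        rw [h1, Matrix.mulVec_add]
        exact map_add (EuclideanSpace.equiv (Fin n × Fin d) ℝ).symm _ _
      map_smul' := by
        intro c y
        show toE (P *ᵥ fun p => (c • y) p) = c • toE (P *ᵥ fun p => y p)
        have h1 : (fun p => (c • y) p) = c • (fun p => y p) := rfl
        rw [h1, Matrix.mulVec_smul]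
        exact _root_.map_smul (EuclideanSpace.equiv (Fin n × Fin d) ℝ).symm _ _ }
  let F := LinearMap.toContinuousLinearMap Flin
  have hFx : ∀ x : Fin n × Fin d → ℝ, F (toE x) = toE (P *ᵥ x) := fun x => rfl
  -- the compact set
  let K : Set (EuclideanSpace ℝ (Fin n × Fin d)) :=
    ((consSub n d)ᗮ : Set (EuclideanSpace ℝ (Fin n × Fin d))) ∩ Metric.sphere 0 1
  have hKcl : IsClosed K :=
    (Submodule.closed_of_finiteDimensional _).inter Metric.isClosed_sphere
  have hKcpt : IsCompact K := by
    refine (isCompact_closedBall (0 : EuclideanSpace ℝ (Fin n × Fin d)) 1).of_isClosed_subset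
      hKcl ?_
    intro y hy
    rw [Metric.mem_closedBall]
    rw [Set.mem_inter_iff, Metric.mem_sphere] at hy
    exact hy.2.le
  rcases K.eq_empty_or_nonempty with hKe | hKne
  · -- W is trivial
    refine ⟨1/2, by norm_num, by norm_num, fun x hx => ?_⟩
    by_cases hx0 : x = 0
    · subst hx0
      rw [Matrix.mulVec_zero]
      have : euclNorm (0 : Fin n × Fin d → ℝ) = 0 := by
        rw [euclNorm_eq_norm]
        have : toE (0 : Fin n × Fin d → ℝ) = 0 := map_zero (EuclideanSpace.equiv _ ℝ).symm
        rw [this, norm_zero]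
      rw [this, mul_zero]
    · exfalso
      have hpos : 0 < euclNorm x := euclNorm_pos_of_ne_zero hx0
      have : (euclNorm x)⁻¹ • toE x ∈ K := by
        constructor
        · exact Submodule.smul_mem _ _ hx
        · rw [mem_sphere_zero_iff_norm, norm_smul, Real.norm_eq_abs,
            abs_of_pos (inv_pos.mpr hpos), ← euclNorm_eq_norm, inv_mul_cancel₀ hpos.ne']
      rw [hKe] at this
      exact this
  · obtain ⟨y0, hy0K, hy0max⟩ := hKcpt.exists_isMaxOn hKne
      ((F.continuous.norm).continuousOn)
    set ρ := ‖F y0‖ with hρdef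
    have hy0W : y0 ∈ (consSub n d)ᗮ := hy0K.1
    have hy0n : ‖y0‖ = 1 := mem_sphere_zero_iff_norm.mp hy0K.2
    have hy0E : toE (fun p => y0 p) = y0 := rfl
    have hρlt : ρ < 1 := by
      have hx0 : (fun p => y0 p) ≠ 0 := by
        intro h0
        have : y0 = 0 := by rw [← hy0E, h0]; exact map_zero (EuclideanSpace.equiv _ ℝ).symm
        rw [this, norm_zero] at hy0n; norm_num at hy0n
      have hWx : toE (fun p => y0 p) ∈ (consSub n d)ᗮ := by rw [hy0E]; exact hy0W
      have := hstrict (fun p => y0 p) hWx hx0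
      calc ρ = ‖F (toE (fun p => y0 p))‖ := by rw [hy0E]
        _ = ‖toE (P *ᵥ (fun p => y0 p))‖ := by rw [hFx]
        _ = euclNorm (P *ᵥ (fun p => y0 p)) := (euclNorm_eq_norm _).symm
        _ < euclNorm (fun p => y0 p) := this
        _ = ‖toE (fun p => y0 p)‖ := euclNorm_eq_norm _
        _ = 1 := by rw [hy0E, hy0n]
    refine ⟨ρ, norm_nonneg _, hρlt, fun x hx => ?_⟩
    by_cases hx0 : x = 0
    · subst hx0
      rw [Matrix.mulVec_zero]
      have h0 : euclNorm (0 : Fin n × Fin d → ℝ) = 0 := by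
        rw [euclNorm_eq_norm]
        have : toE (0 : Fin n × Fin d → ℝ) = 0 := map_zero (EuclideanSpace.equiv _ ℝ).symm
        rw [this, norm_zero]
      rw [h0, mul_zero]
    · have hpos : 0 < euclNorm x := euclNorm_pos_of_ne_zero hx0
      have hyK : (euclNorm x)⁻¹ • toE x ∈ K := by
        constructor
        · exact Submodule.smul_mem _ _ hx
        · rw [mem_sphere_zero_iff_norm, norm_smul, Real.norm_eq_abs,
            abs_of_pos (inv_pos.mpr hpos), ← euclNorm_eq_norm, inv_mul_cancel₀ hpos.ne']
      have hle := hy0max hyK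
      have hFy : ‖F ((euclNorm x)⁻¹ • toE x)‖ = (euclNorm x)⁻¹ * ‖F (toE x)‖ := by
        rw [F.map_smul, norm_smul, Real.norm_eq_abs, abs_of_pos (inv_pos.mpr hpos)]
      have hle2 : (euclNorm x)⁻¹ * ‖F (toE x)‖ ≤ ρ := by
        rw [← hFy]; exact hle
      have h2 : ‖F (toE x)‖ ≤ ρ * euclNorm x := by
        have := mul_le_mul_of_nonneg_left hle2 hpos.le
        rwa [← mul_assoc, mul_inv_cancel₀ hpos.ne', one_mul, mul_comm (euclNorm x) ρ] at this
      calc euclNorm (P *ᵥ x) = ‖toE (P *ᵥ x)‖ := euclNorm_eq_norm _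
        _ = ‖F (toE x)‖ := by rw [hFx]
        _ ≤ ρ * euclNorm x := h2
end Contr
section Hard
variable {n d m : ℕ}
  {L : ℕ → Matrix (Fin n × Fin d) (Fin n × Fin d) ℝ} {Δt : ℕ → ℝ}

theorem converge_of_null (hn : 2 ≤ n) (hm : 1 ≤ m)
    (hLper : ∀ k, L k = L (k % m)) (hΔper : ∀ k, Δt k = Δt (k % m))
    (hΔ : ∀ k, 0 < Δt k) (hpsd : ∀ k, (L k).PosSemidef)
    (hR : ∀ k, ∀ x : Fin n × Fin d → ℝ, isConsensus x → (L k).mulVec x = 0)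
    (Hnull : ∀ x : Fin n × Fin d → ℝ,
      ((∑ k ∈ Finset.range m, Δt k • L k).mulVec x = 0 ↔ isConsensus x))
    (x0 : Fin n × Fin d → ℝ) :
    Tendsto (stateSeq (fun k => NormedSpace.exp (-(Δt k • L k))) x0) atTop
      (nhds (fun p => (n : ℝ)⁻¹ * ∑ i : Fin n, x0 (i, p.2))) := by
  obtain ⟨ρ, hρ0, hρ1, hcontr⟩ := contraction hm hLper hΔper hΔ hpsd hR Hnull
  set r : Fin n × Fin d → ℝ := avgVec n d x0 with hrdef
  set w0 : Fin n × Fin d → ℝ := x0 - r with hw0def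
  have hrcons : isConsensus r := avgVec_isConsensus x0
  have hw0W : toE w0 ∈ (consSub n d)ᗮ := by
    rw [mem_orth_iff]
    intro c hc
    exact consensus_dot_sub_avg (lt_of_lt_of_le (by norm_num) hn) x0 c hc
  -- decomposition of the state
  have hdecomp : ∀ k, stateSeq (Emat L Δt) x0 k = r + Pseq (Emat L Δt) k *ᵥ w0 := by
    intro k
    rw [stateSeq_eq_Pseq]
    have hx0 : x0 = r + w0 := by rw [hw0def]; ring
    rw [hx0, Matrix.mulVec_add, Pseq_fix hR k hrcons]
  -- norms along periods
  have hW : ∀ q, toE (Pseq (Emat L Δt) (m * q) *ᵥ w0) ∈ (consSub n d)ᗮ :=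
    fun q => toE_Pseq_mem_orth hpsd hR _ hw0W
  have hper : ∀ q, euclNorm (Pseq (Emat L Δt) (m * q) *ᵥ w0) ≤ ρ ^ q * euclNorm w0 := by
    intro q
    induction q with
    | zero =>
        simp only [Nat.mul_zero, pow_zero, one_mul]
        rw [Pseq, Matrix.one_mulVec]
    | succ q ih =>
        have hsplit : Pseq (Emat L Δt) (m * (q+1))
            = Pseq (Emat L Δt) m * Pseq (Emat L Δt) (m * q) := by
          rw [Nat.mul_succ, ← Pseq_shift hLper hΔper q m]
        rw [hsplit, ← Matrix.mulVec_mulVec]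
        calc euclNorm (Pseq (Emat L Δt) m *ᵥ (Pseq (Emat L Δt) (m*q) *ᵥ w0))
            ≤ ρ * euclNorm (Pseq (Emat L Δt) (m*q) *ᵥ w0) := hcontr _ (hW q)
          _ ≤ ρ * (ρ ^ q * euclNorm w0) := mul_le_mul_of_nonneg_left ih hρ0
          _ = ρ ^ (q+1) * euclNorm w0 := by ring
  have hbound : ∀ k, euclNorm (Pseq (Emat L Δt) k *ᵥ w0) ≤ ρ ^ (k / m) * euclNorm w0 := by
    intro k
    have hsplit : Pseq (Emat L Δt) k
        = Pseq (Emat L Δt) (k % m) * Pseq (Emat L Δt) (m * (k / m)) := by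
      conv_lhs => rw [← Nat.div_add_mod k m]
      exact Pseq_shift hLper hΔper (k / m) (k % m)
    rw [hsplit, ← Matrix.mulVec_mulVec]
    calc euclNorm (Pseq (Emat L Δt) (k % m) *ᵥ (Pseq (Emat L Δt) (m * (k/m)) *ᵥ w0))
        ≤ euclNorm (Pseq (Emat L Δt) (m * (k/m)) *ᵥ w0) := Pseq_norm_le hpsd hΔ _ _
      _ ≤ ρ ^ (k / m) * euclNorm w0 := hper (k / m)
  -- the tendsto statement
  have hconv : Tendsto (fun k => ρ ^ (k / m) * euclNorm w0) atTop (nhds 0) := by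
    have hdiv : Tendsto (fun k : ℕ => k / m) atTop atTop := by
      refine tendsto_atTop_atTop.mpr fun b => ⟨b * m, fun k hk => ?_⟩
      exact (Nat.le_div_iff_mul_le (Nat.lt_of_lt_of_le Nat.zero_lt_one hm)).mpr hk
    have hpow : Tendsto (fun q : ℕ => ρ ^ q) atTop (nhds 0) :=
      tendsto_pow_atTop_nhds_zero_of_lt_one hρ0 hρ1
    have := (hpow.comp hdiv).mul_const (euclNorm w0)
    rwa [zero_mul] at this
  have hE : (fun k => NormedSpace.exp (-(Δt k • L k))) = Emat L Δt := rfl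
  rw [hE]
  rw [tendsto_pi_nhds]
  intro p
  have hrp : ((n : ℝ)⁻¹ * ∑ i : Fin n, x0 (i, p.2)) = r p := rfl
  rw [hrp]
  refine tendsto_iff_dist_tendsto_zero.mpr ?_
  refine squeeze_zero (fun k => dist_nonneg) (fun k => ?_) hconv
  rw [Real.dist_eq]
  have : stateSeq (Emat L Δt) x0 k p - r p = (Pseq (Emat L Δt) k *ᵥ w0) p := by
    rw [hdecomp k]; simp
  rw [this]
  exact le_trans (abs_apply_le_euclNorm _ p) (hbound k)
end Hard
section Easy
variable {n d m : ℕ}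
  {L : ℕ → Matrix (Fin n × Fin d) (Fin n × Fin d) ℝ} {Δt : ℕ → ℝ}

theorem null_of_converge (hm : 1 ≤ m)
    (hLper : ∀ k, L k = L (k % m)) (hΔper : ∀ k, Δt k = Δt (k % m))
    (hΔ : ∀ k, 0 < Δt k) (hpsd : ∀ k, (L k).PosSemidef)
    (hR : ∀ k, ∀ x : Fin n × Fin d → ℝ, isConsensus x → (L k).mulVec x = 0)
    (hconv : ∀ x0 : Fin n × Fin d → ℝ,
        Tendsto (stateSeq (fun k => NormedSpace.exp (-(Δt k • L k))) x0) atTop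
          (nhds (fun p => (n : ℝ)⁻¹ * ∑ i : Fin n, x0 (i, p.2))))
    (x : Fin n × Fin d → ℝ) :
    ((∑ k ∈ Finset.range m, Δt k • L k).mulVec x = 0 ↔ isConsensus x) := by
  have hsum_mulVec : ∀ y : Fin n × Fin d → ℝ,
      (∑ k ∈ Finset.range m, Δt k • L k) *ᵥ y
        = ∑ k ∈ Finset.range m, Δt k • ((L k) *ᵥ y) := by
    intro y
    have h1 := map_sum (mulVecAt y) (fun k => Δt k • L k) (Finset.range m)
    have h2 : (mulVecAt y) (∑ k ∈ Finset.range m, Δt k • L k)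
        = (∑ k ∈ Finset.range m, Δt k • L k) *ᵥ y := rfl
    rw [h2] at h1
    rw [h1]
    refine Finset.sum_congr rfl fun k _ => ?_
    simp [mulVecAt, Matrix.smul_mulVec]
  constructor
  · intro hx
    -- each L k kills x
    have hqf : ∀ k, 0 ≤ x ⬝ᵥ ((L k) *ᵥ x) := by
      intro k
      have := (hpsd k).dotProduct_mulVec_nonneg x
      simpa using this
    have hdot : ∑ k ∈ Finset.range m, Δt k * (x ⬝ᵥ ((L k) *ᵥ x)) = 0 := by
      have h0 : x ⬝ᵥ ((∑ k ∈ Finset.range m, Δt k • L k) *ᵥ x) = 0 := by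
        rw [hx, dotProduct_zero]
      rw [hsum_mulVec x, dot_sum_vec] at h0
      rw [← h0]
      refine Finset.sum_congr rfl fun k _ => ?_
      rw [dotProduct_smul, smul_eq_mul]
    have heach : ∀ k ∈ Finset.range m, Δt k * (x ⬝ᵥ ((L k) *ᵥ x)) = 0 := by
      refine (Finset.sum_eq_zero_iff_of_nonneg fun k _ => ?_).mp hdot
      exact mul_nonneg (hΔ k).le (hqf k)
    have hLk : ∀ k, (L k) *ᵥ x = 0 := by
      intro k
      have hkm : k % m ∈ Finset.range m :=
        Finset.mem_range.mpr (Nat.mod_lt k (Nat.lt_of_lt_of_le Nat.zero_lt_one hm))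
      have h1 := heach (k % m) hkm
      have h2 : x ⬝ᵥ ((L (k % m)) *ᵥ x) = 0 := by
        rcases mul_eq_zero.mp h1 with h | h
        · exact absurd h (hΔ (k % m)).ne'
        · exact h
      have h3 : (L (k % m)) *ᵥ x = 0 := by
        have := ((hpsd (k % m)).dotProduct_mulVec_zero_iff x)
        rw [← this]
        simpa using h2
      rw [hLper k]
      exact h3
    -- the state sequence is constant
    have hconst : ∀ j, stateSeq (fun k => NormedSpace.exp (-(Δt k • L k))) x j = x := by
      intro j
      induction j with
      | zero => rfl
      | succ j ih =>
          show NormedSpace.exp (-(Δt j • L j)) *ᵥ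
            (stateSeq (fun k => NormedSpace.exp (-(Δt k • L k))) x j) = x
          rw [ih]
          exact exp_mulVec_of_mulVec_zero (hLk j)
    have hlim := hconv x
    have hlim2 : Tendsto (stateSeq (fun k => NormedSpace.exp (-(Δt k • L k))) x) atTop
        (nhds x) := by
      have : stateSeq (fun k => NormedSpace.exp (-(Δt k • L k))) x = fun _ => x :=
        funext hconst
      rw [this]
      exact tendsto_const_nhds
    have hxeq : x = fun p => (n : ℝ)⁻¹ * ∑ i : Fin n, x (i, p.2) :=
      tendsto_nhds_unique hlim2 hlim
    exact ⟨fun q => (n : ℝ)⁻¹ * ∑ i : Fin n, x (i, q), fun p => by rw [congrFun hxeq p]⟩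
  · intro hx
    rw [hsum_mulVec x]
    refine Finset.sum_eq_zero fun k _ => ?_
    rw [hR k x hx, smul_zero]
end Easy


/-- For a periodic switched matrix-weighted network with Laplacians
`L^k = L^{k mod m}` (symmetric PSD, `R ⊆ null(L^k)`) and dwell times
`Δt k = Δt (k mod m) > 0`, average consensus is reached from every initial state
if and only if the integral Laplacian over one period,
`∑_{k=0}^{m-1} Δt_k L^k`, has null space equal to `R`. -/
theorem periodic_average_consensus_iff_null_integral
    {n d m : ℕ} (hn : 2 ≤ n) (hd : 1 ≤ d) (hm : 1 ≤ m)
    (L : ℕ → Matrix (Fin n × Fin d) (Fin n × Fin d) ℝ) (Δt : ℕ → ℝ)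
    (hLper : ∀ k, L k = L (k % m)) (hΔper : ∀ k, Δt k = Δt (k % m))
    (hΔ : ∀ k, 0 < Δt k)
    (hpsd : ∀ k, (L k).PosSemidef)
    (hR : ∀ k, ∀ x : Fin n × Fin d → ℝ, isConsensus x → (L k).mulVec x = 0) :
    (∀ x0 : Fin n × Fin d → ℝ,
        Tendsto (stateSeq (fun k => NormedSpace.exp (-(Δt k • L k))) x0) atTop
          (nhds (fun p => (n : ℝ)⁻¹ * ∑ i : Fin n, x0 (i, p.2))))
      ↔ (∀ x : Fin n × Fin d → ℝ,
          ((∑ k ∈ Finset.range m, Δt k • L k).mulVec x = 0 ↔ isConsensus x)) := by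
  constructor
  · intro hconv x
    exact null_of_converge hm hLper hΔper hΔ hpsd hR hconv x
  · intro Hnull x0
    exact converge_of_null hn hm hLper hΔper hΔ hpsd hR Hnull x0
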